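/- arXiv:2308.03687 — 4 statements merged into one kernel-verified Lean document; each statement's English description precedes it below -/
import Mathlib

section
/- Let {R_k}, {P_k}, {Q_k} be sequences of nonnegative random variables adapted to a filtration {F_k} such that ∑_{k=1}^∞ Q_k < ∞ almost surely and E[R_{k+1} | F_k] ≤ R_k − P_k + Q_k for all k. Then almost surely ∑_{k=1}^∞ P_k < ∞ and lim_{k→∞} R_k exists and is finite. -/
open MeasureTheory Filter
open scoped NNReal ENNReal

namespace RobbinsSiegmundAux

variable {Ω : Type*} {m0 : MeasurableSpace Ω} {μ : Measure Ω} {𝒢 : Filtration ℕ m0}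

/-- The first time `f ≥ r`, capped at `n` (the older Mathlib `leastGE`). -/
noncomputable def leastGEb (f : ℕ → Ω → ℝ) (r : ℝ) (n : ℕ) : Ω → WithTop ℕ :=
  fun ω => ((hittingBtwn f (Set.Ici r) 0 n ω : ℕ) : WithTop ℕ)

theorem untopA_natCast' (n : ℕ) : ((n : WithTop ℕ)).untopA = n := rfl

theorem leastGEb_le {f : ℕ → Ω → ℝ} {r : ℝ} {n : ℕ} (ω : Ω) :
    leastGEb f r n ω ≤ (n : WithTop ℕ) :=
  WithTop.coe_le_coe.mpr (hittingBtwn_le ω)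

theorem isStoppingTime_leastGEb {T : ℕ → Ω → ℝ} (hT : StronglyAdapted 𝒢 T) (r : ℝ) (n : ℕ) :
    IsStoppingTime 𝒢 (leastGEb T r n) :=
  hT.adapted.isStoppingTime_hittingBtwn measurableSet_Ici

theorem leastGEb_eq_min (f : ℕ → Ω → ℝ) (π : Ω → ℕ) (r : ℝ) (ω : Ω) {n : ℕ}
    (hπn : ∀ ω, π ω ≤ n) :
    leastGEb f r (π ω) ω = min ((π ω : ℕ) : WithTop ℕ) (leastGEb f r n ω) := by
  have key : hittingBtwn f (Set.Ici r) 0 (π ω) ω =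
      min (π ω) (hittingBtwn f (Set.Ici r) 0 n ω) := by
    by_cases h : ∃ j ∈ Set.Icc 0 (π ω), f j ω ∈ Set.Ici r
    · rw [hittingBtwn_eq_hittingBtwn_of_exists (hπn ω) h, min_eq_right]
      rw [← hittingBtwn_eq_hittingBtwn_of_exists (hπn ω) h]
      exact hittingBtwn_le ω
    · have h1 : hittingBtwn f (Set.Ici r) 0 (π ω) ω = π ω := by
        simp only [hittingBtwn, if_neg h]
      rw [h1, min_eq_left]
      by_contra hlt
      push_neg at hlt
      have hn : hittingBtwn f (Set.Ici r) 0 n ω < n := lt_of_lt_of_le hlt (hπn ω)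
      exact h ⟨_, ⟨Nat.zero_le _, hlt.le⟩, hittingBtwn_mem_set_of_hittingBtwn_lt hn⟩
  simp only [leastGEb, key]
  exact WithTop.coe_min _ _

/-- Generalization of `MeasureTheory.stoppedValue_stoppedValue_leastGE` to where the hitting
times come from a different process. -/
theorem stoppedValue_stoppedValue_leastGE' (Z T : ℕ → Ω → ℝ) (π : Ω → ℕ∞) (r : ℝ) {n : ℕ}
    (hπn : ∀ ω, π ω ≤ n) : stoppedValue (fun i => stoppedValue Z (leastGEb T r i)) π =
      stoppedValue Z (fun ω => min (π ω) (leastGEb T r n ω)) := by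
  ext1 ω
  have hπ_top : π ω ≠ ⊤ := ne_top_of_le_ne_top (by simp) (hπn ω)
  have hπ' : ∀ ω, (π ω).untopA ≤ n := fun ω => WithTop.untopA_le (hπn ω)
  have hc : (((π ω).untopA : ℕ) : WithTop ℕ) = π ω := by
    generalize π ω = x at hπ_top ⊢
    cases x
    · exact absurd rfl hπ_top
    · rfl
  simp only [stoppedValue]
  rw [leastGEb_eq_min T (fun ω => (π ω).untopA) r ω hπ', hc]

/-- Generalization of `MeasureTheory.Submartingale.stoppedValue_leastGE` to where the hitting
times come from a different (adapted) process. -/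
theorem submartingale_stoppedValue_leastGE' [IsFiniteMeasure μ] {Z T : ℕ → Ω → ℝ}
    (hZ : Submartingale Z 𝒢 μ) (hT : StronglyAdapted 𝒢 T) (r : ℝ) :
    Submartingale (fun i => stoppedValue Z (leastGEb T r i)) 𝒢 μ := by
  rw [submartingale_iff_expected_stoppedValue_mono]
  · intro σ π hσ hπ hσ_le_π hπ_bdd
    obtain ⟨n, hπ_le_n⟩ := hπ_bdd
    simp_rw [stoppedValue_stoppedValue_leastGE' Z T σ r fun i => (hσ_le_π i).trans (hπ_le_n i)]
    simp_rw [stoppedValue_stoppedValue_leastGE' Z T π r hπ_le_n]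
    refine hZ.expected_stoppedValue_mono ?_ ?_ ?_ fun ω => (min_le_left _ _).trans (hπ_le_n ω)
    · exact hσ.min (isStoppingTime_leastGEb hT _ _)
    · exact hπ.min (isStoppingTime_leastGEb hT _ _)
    · exact fun ω => min_le_min (hσ_le_π ω) le_rfl
  · exact fun i => stronglyMeasurable_stoppedValue_of_le
      hZ.stronglyAdapted.isStronglyProgressive_of_discrete
      (isStoppingTime_leastGEb hT _ _) leastGEb_le
  · exact fun i => integrable_stoppedValue _ (isStoppingTime_leastGEb hT _ _) hZ.integrable
      leastGEb_le

end RobbinsSiegmundAux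

open RobbinsSiegmundAux

/-- Robbins–Siegmund lemma: if `{R_k}, {P_k}, {Q_k}` are nonnegative adapted
sequences with `∑ Q_k < ∞` a.s. and `E[R_{k+1} | F_k] ≤ R_k − P_k + Q_k`,
then a.s. `∑ P_k < ∞` and `lim R_k` exists and is finite. -/
theorem robbins_siegmund {Ω : Type*} {m0 : MeasurableSpace Ω}
    {μ : Measure Ω} [IsProbabilityMeasure μ]
    (ℱ : ℕ → MeasurableSpace Ω) (hle : ∀ k, ℱ k ≤ m0) (hmono : Monotone ℱ)
    (R P Q : ℕ → Ω → ℝ)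
    (hRnn : ∀ k ω, 0 ≤ R k ω) (hPnn : ∀ k ω, 0 ≤ P k ω) (hQnn : ∀ k ω, 0 ≤ Q k ω)
    (hRmeas : ∀ k, StronglyMeasurable[ℱ k] (R k))
    (hPmeas : ∀ k, StronglyMeasurable[ℱ k] (P k))
    (hQmeas : ∀ k, StronglyMeasurable[ℱ k] (Q k))
    (hRint : ∀ k, Integrable (R k) μ)
    (hPint : ∀ k, Integrable (P k) μ)
    (hQint : ∀ k, Integrable (Q k) μ)
    (hQsum : ∀ᵐ ω ∂μ, Summable fun k => Q k ω)
    (hsup : ∀ k, μ[R (k + 1) | ℱ k] ≤ᵐ[μ] fun ω => R k ω - P k ω + Q k ω) :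
    ∀ᵐ ω ∂μ, Summable (fun k => P k ω) ∧
      ∃ r : ℝ, Tendsto (fun k => R k ω) atTop (nhds r) := by
  classical
  set 𝒢 : Filtration ℕ m0 := ⟨ℱ, hmono, hle⟩ with h𝒢
  -- partial sums
  set A : ℕ → Ω → ℝ := fun k ω => ∑ j ∈ Finset.range k, P j ω with hA
  set S : ℕ → Ω → ℝ := fun k ω => ∑ j ∈ Finset.range k, Q j ω with hS
  set c : ℝ := ∫ ω, R 0 ω ∂μ with hc
  have hc0 : 0 ≤ c := integral_nonneg fun ω => hRnn 0 ω
  -- the submartingale Z and the adapted process T driving the hitting times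
  set Z : ℕ → Ω → ℝ := fun k ω => S k ω - R k ω - A k ω + c with hZdef
  set T : ℕ → Ω → ℝ := fun k ω => S (k + 1) ω with hT
  have hSmeas : ∀ k l, k ≤ l + 1 → StronglyMeasurable[ℱ l] (S k) := fun k l hkl =>
    Finset.stronglyMeasurable_fun_sum _ fun j hj =>
      (hQmeas j).mono (hmono (by have := Finset.mem_range.mp hj; omega))
  have hAmeas : ∀ k l, k ≤ l + 1 → StronglyMeasurable[ℱ l] (A k) := fun k l hkl =>
    Finset.stronglyMeasurable_fun_sum _ fun j hj =>
      (hPmeas j).mono (hmono (by have := Finset.mem_range.mp hj; omega))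
  have hSint : ∀ k, Integrable (S k) μ := fun k =>
    integrable_finset_sum _ fun j _ => hQint j
  have hAint : ∀ k, Integrable (A k) μ := fun k =>
    integrable_finset_sum _ fun j _ => hPint j
  have hZint : ∀ k, Integrable (Z k) μ := fun k =>
    ((((hSint k).sub (hRint k)).sub (hAint k)).add (integrable_const c))
  have hZadp : StronglyAdapted 𝒢 Z := fun k =>
    ((((hSmeas k k (Nat.le_succ k)).sub (hRmeas k)).sub (hAmeas k k (Nat.le_succ k))).add
      stronglyMeasurable_const)
  have hTadp : StronglyAdapted 𝒢 T := fun k => hSmeas (k + 1) k le_rfl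
  -- Z is a submartingale
  have hZsub : Submartingale Z 𝒢 μ := by
    refine submartingale_nat hZadp hZint fun i => ?_
    set W : Ω → ℝ := fun ω => S (i + 1) ω - A (i + 1) ω + c with hW
    have hWmeas : StronglyMeasurable[ℱ i] W :=
      ((hSmeas (i + 1) i le_rfl).sub (hAmeas (i + 1) i le_rfl)).add
        stronglyMeasurable_const
    have hWint : Integrable W μ := ((hSint _).sub (hAint _)).add (integrable_const c)
    have hZeq : Z (i + 1) = W + -R (i + 1) := by
      ext ω; simp only [hZdef, hW, Pi.add_apply, Pi.neg_apply]; ring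
    have h1 : μ[Z (i + 1) | ℱ i] =ᵐ[μ] fun ω => W ω - (μ[R (i + 1) | ℱ i]) ω := by
      have e1 : μ[Z (i + 1) | ℱ i] =ᵐ[μ] μ[W | ℱ i] + μ[-R (i + 1) | ℱ i] := by
        rw [hZeq]; exact condExp_add hWint (hRint _).neg _
      have e2 : μ[W | ℱ i] = W := condExp_of_stronglyMeasurable (hle i) hWmeas hWint
      have e3 : μ[-R (i + 1) | ℱ i] =ᵐ[μ] -μ[R (i + 1) | ℱ i] := condExp_neg _ _
      filter_upwards [e1, e3] with ω hω1 hω3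
      rw [hω1]
      simp only [Pi.add_apply, e2, hω3, Pi.neg_apply]
      ring
    filter_upwards [h1, hsup i] with ω hω1 hω2
    rw [hω1]
    have hSsucc : S (i + 1) ω = S i ω + Q i ω := Finset.sum_range_succ _ _
    have hAsucc : A (i + 1) ω = A i ω + P i ω := Finset.sum_range_succ _ _
    have : Z i ω = S i ω - R i ω - A i ω + c := rfl
    have hWω : W ω = S (i + 1) ω - A (i + 1) ω + c := rfl
    have h2 : (μ[R (i + 1) | ℱ i]) ω ≤ R i ω - P i ω + Q i ω := hω2
    rw [this, hWω, hSsucc, hAsucc]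
    linarith
  -- the stopped submartingales and their convergence
  have key : ∀ a : ℕ, ∀ᵐ ω ∂μ,
      ∃ l, Tendsto (fun i => stoppedValue Z (leastGEb T a i) ω) atTop (nhds l) := by
    intro a
    have hsubm := submartingale_stoppedValue_leastGE' hZsub hTadp (a : ℝ)
    -- pointwise bound : stopped values ≤ a + c
    have hbd : ∀ i ω, stoppedValue Z (leastGEb T (a : ℝ) i) ω ≤ (a : ℝ) + c := by
      intro i ω
      set m := hittingBtwn T (Set.Ici (a : ℝ)) 0 i ω with hm
      have hZle : stoppedValue Z (leastGEb T (a : ℝ) i) ω ≤ S m ω + c := by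
        have hRa := hRnn m ω
        have hAa : 0 ≤ A m ω := Finset.sum_nonneg fun j _ => hPnn j ω
        simp only [stoppedValue, leastGEb, untopA_natCast', ← hm, hZdef]
        linarith
      refine hZle.trans (add_le_add_left ?_ c)
      rcases Nat.eq_zero_or_eq_succ_pred m with h0 | hsucc
      · rw [h0]
        simp only [hS, Finset.range_zero, Finset.sum_empty]
        exact Nat.cast_nonneg a
      · have hk : m - 1 < m := by omega
        have := notMem_of_lt_hittingBtwn (u := T) (s := Set.Ici (a : ℝ)) (n := 0) (m := i)
          (ω := ω) (by rw [hm] at hk; exact hk) (Nat.zero_le _)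
        simp only [Set.mem_Ici, not_le] at this
        have hTm : T (m - 1) ω = S m ω := by
          simp only [hT]; congr 1; omega
        rw [← hTm]
        exact this.le
      -- m = 0 or m = k+1
    -- integral lower bound
    have h00 : ∀ ω : Ω, leastGEb T (a : ℝ) 0 ω = 0 := fun ω => by
      have := hittingBtwn_le (u := T) (s := Set.Ici (a : ℝ)) (n := 0) (m := 0) ω
      simp [leastGEb, Nat.le_zero.mp this]
    have hZ0 : ∫ ω, Z 0 ω ∂μ = 0 := by
      have hZ0eq : Z 0 = fun ω => c - R 0 ω := by
        ext ω
        simp only [hZdef, hS, hA, Finset.range_zero, Finset.sum_empty]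
        ring
      rw [hZ0eq, integral_sub (integrable_const c) (hRint 0), integral_const]
      simp [hc]
    have hint0 : ∀ i, (0 : ℝ) ≤ ∫ ω, stoppedValue Z (leastGEb T (a : ℝ) i) ω ∂μ := by
      intro i
      have h1 := hsubm.setIntegral_le (Nat.zero_le i) (@MeasurableSet.univ _ (𝒢 0))
      rw [setIntegral_univ, setIntegral_univ] at h1
      refine le_trans ?_ h1
      have heq : (fun ω => stoppedValue Z (leastGEb T (a : ℝ) 0) ω) = Z 0 := by
        ext ω; simp [stoppedValue, h00 ω]
      rw [heq, hZ0]
    -- L¹ bound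
    have hbdd : ∀ i, eLpNorm (fun ω => stoppedValue Z (leastGEb T (a : ℝ) i) ω) 1 μ ≤
        ((2 * ((a : ℝ) + c)).toNNReal : ℝ≥0) := by
      intro i
      have h1 := eLpNorm_one_le_of_le' (hsubm.integrable i) (hint0 i)
        (Filter.Eventually.of_forall (hbd i))
      refine h1.trans ?_
      rw [measure_univ, mul_one]
      rw [show (((2 * ((a : ℝ) + c)).toNNReal : ℝ≥0) : ℝ≥0∞)
          = ENNReal.ofReal (2 * ((a : ℝ) + c)) from rfl]
      rw [ENNReal.ofReal_mul (by norm_num : (0:ℝ) ≤ 2), ENNReal.ofReal_ofNat]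
    exact hsubm.exists_ae_tendsto_of_bdd hbdd
  -- conclusion
  have key' : ∀ᵐ ω ∂μ, ∀ a : ℕ,
      ∃ l, Tendsto (fun i => stoppedValue Z (leastGEb T (a : ℝ) i) ω) atTop (nhds l) :=
    ae_all_iff.mpr key
  filter_upwards [key', hQsum] with ω hω hQω
  obtain ⟨a, ha⟩ := exists_nat_gt (∑' k, Q k ω)
  have hTlt : ∀ k, T k ω < a := fun k =>
    lt_of_le_of_lt (Summable.sum_le_tsum (Finset.range (k + 1)) (fun j _ => hQnn j ω) hQω) ha
  have hno : ∀ i, leastGEb T (a : ℝ) i ω = i := by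
    intro i
    simp only [leastGEb, hittingBtwn]
    rw [if_neg]
    rintro ⟨j, -, hj⟩
    exact absurd hj (not_le.2 (hTlt j))
  obtain ⟨l, hl⟩ := hω a
  have hZconv : Tendsto (fun i => Z i ω) atTop (nhds l) := by
    simpa only [stoppedValue, hno, untopA_natCast'] using hl
  have hSconv : Tendsto (fun i => S i ω) atTop (nhds (∑' k, Q k ω)) :=
    hQω.hasSum.tendsto_sum_nat
  have hRA : Tendsto (fun i => R i ω + A i ω) atTop (nhds ((∑' k, Q k ω) - l + c)) := by
    have h1 := (hSconv.sub hZconv).add_const c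
    have h2 : (fun i => R i ω + A i ω) = fun i => S i ω - Z i ω + c := by
      ext i; simp only [hZdef]; ring
    rw [h2]; exact h1
  obtain ⟨B, hB⟩ := hRA.bddAbove_range
  have hPsum : Summable fun k => P k ω :=
    summable_of_sum_range_le (fun n => hPnn n ω)
      (fun n => le_trans (le_add_of_nonneg_left (hRnn n ω)) (hB ⟨n, rfl⟩))
  refine ⟨hPsum, ?_⟩
  have hAconv : Tendsto (fun i => A i ω) atTop (nhds (∑' k, P k ω)) :=
    hPsum.hasSum.tendsto_sum_nat
  exact ⟨_, by simpa using hRA.sub hAconv⟩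
end

section
/- Let H ∈ 𝕊^n be symmetric with ‖H‖₂ ≤ κ_H and uᵀHu ≥ ζ‖u‖₂² for all u in a linear subspace N ⊆ ℝ^n, where 0 < ζ ≤ κ_H. Then there exists κ_{uv} > 0 (any κ_{uv} with 2κ_H/√κ_{uv} + κ_H/κ_{uv} ≤ ζ/2 suffices) such that for all u ∈ N and v ∈ N^⊥ with ‖u‖₂² ≥ κ_{uv}‖v‖₂², one has (u+v)ᵀH(u+v) ≥ (ζ/2)‖u‖₂². -/
open scoped RealInnerProductSpace

/-- If a symmetric `H` with `‖H‖₂ ≤ κ_H` satisfies `uᵀHu ≥ ζ‖u‖²` on a subspace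
`N`, then there is `κ_{uv} > 0` (any one with `2κ_H/√κ_{uv} + κ_H/κ_{uv} ≤ ζ/2`)
such that `‖u‖² ≥ κ_{uv}‖v‖²` for `u ∈ N`, `v ∈ Nᗮ` implies
`(u+v)ᵀH(u+v) ≥ (ζ/2)‖u‖²`. -/
theorem curvature_on_nullspace {n : ℕ}
    (H : EuclideanSpace ℝ (Fin n) →L[ℝ] EuclideanSpace ℝ (Fin n))
    (hsymm : IsSelfAdjoint H)
    (κH ζ : ℝ) (hζ : 0 < ζ) (hζκ : ζ ≤ κH) (hHnorm : ‖H‖ ≤ κH)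
    (N : Submodule ℝ (EuclideanSpace ℝ (Fin n)))
    (hN : ∀ u ∈ N, ζ * ‖u‖ ^ 2 ≤ ⟪H u, u⟫) :
    ∃ κuv : ℝ, 0 < κuv ∧ 2 * κH / Real.sqrt κuv + κH / κuv ≤ ζ / 2 ∧
      ∀ u ∈ N, ∀ v ∈ Nᗮ, κuv * ‖v‖ ^ 2 ≤ ‖u‖ ^ 2 →
        ζ / 2 * ‖u‖ ^ 2 ≤ ⟪H (u + v), u + v⟫ := by
  have hκH : 0 < κH := lt_of_lt_of_le hζ hζκ
  set s : ℝ := 8 * κH / ζ with hs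
  have hspos : 0 < s := by positivity
  refine ⟨s ^ 2, by positivity, ?_, ?_⟩
  · have hsqrt : Real.sqrt (s ^ 2) = s := Real.sqrt_sq hspos.le
    rw [hsqrt]
    have h1 : 2 * κH / s = ζ / 4 := by
      field_simp [hs]
      rw [hs, div_mul_cancel₀ _ hζ.ne']; ring
    have h2 : κH / s ^ 2 ≤ ζ / 64 := by
      have heq : κH / s ^ 2 = ζ ^ 2 / (64 * κH) := by
        rw [hs]; field_simp; ring
      rw [heq, div_le_div_iff₀ (by positivity) (by norm_num)]
      nlinarith
    linarith
  · intro u hu v hv hκ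
    have hb := norm_nonneg v
    have ha := norm_nonneg u
    have hsb : s * ‖v‖ ≤ ‖u‖ := by
      nlinarith [mul_nonneg hspos.le hb]
    have h1 : ζ * ‖u‖ ^ 2 ≤ ⟪H u, u⟫ := hN u hu
    have h2 : |⟪H u, v⟫| ≤ κH * (‖u‖ * ‖v‖) := by
      calc |⟪H u, v⟫| ≤ ‖H u‖ * ‖v‖ := abs_real_inner_le_norm _ _
        _ ≤ (‖H‖ * ‖u‖) * ‖v‖ := by
            gcongr; exact H.le_opNorm u
        _ ≤ κH * (‖u‖ * ‖v‖) := by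
            rw [mul_assoc]; gcongr
    have h3 : |⟪H v, v⟫| ≤ κH * (‖v‖ * ‖v‖) := by
      calc |⟪H v, v⟫| ≤ ‖H v‖ * ‖v‖ := abs_real_inner_le_norm _ _
        _ ≤ (‖H‖ * ‖v‖) * ‖v‖ := by
            gcongr; exact H.le_opNorm v
        _ ≤ κH * (‖v‖ * ‖v‖) := by
            rw [mul_assoc]; gcongr
    have hsymm' : ⟪H v, u⟫ = ⟪H u, v⟫ := by
      exact (hsymm.isSymmetric v u).trans (real_inner_comm (H u) v)
    have hexp : ⟪H (u + v), u + v⟫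
        = ⟪H u, u⟫ + 2 * ⟪H u, v⟫ + ⟪H v, v⟫ := by
      rw [map_add, inner_add_left, inner_add_right, inner_add_right, hsymm']
      ring
    rw [hexp]
    have h2' : -(κH * (‖u‖ * ‖v‖)) ≤ ⟪H u, v⟫ := neg_le_of_abs_le h2
    have h3' : -(κH * (‖v‖ * ‖v‖)) ≤ ⟪H v, v⟫ := neg_le_of_abs_le h3
    have hζsb : 8 * κH * ‖v‖ ≤ ζ * ‖u‖ := by
      have := mul_le_mul_of_nonneg_left hsb hζ.le
      rw [hs] at this
      calc 8 * κH * ‖v‖ = ζ * (8 * κH / ζ * ‖v‖) := by field_simp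
        _ ≤ ζ * ‖u‖ := this
    have hab : 2 * κH * (‖u‖ * ‖v‖) ≤ ζ / 4 * ‖u‖ ^ 2 := by
      nlinarith [mul_le_mul_of_nonneg_left hζsb ha]
    have hbb : κH * ‖v‖ ^ 2 ≤ ζ / 64 * ‖u‖ ^ 2 := by
      nlinarith [mul_le_mul hζsb hζsb (by positivity) (mul_nonneg hζ.le ha),
        mul_le_mul_of_nonneg_right hζκ (mul_nonneg hζ.le (sq_nonneg ‖u‖)),
        hκH, sq_nonneg ‖v‖, hζ]
    have h3'' : -(κH * ‖v‖ ^ 2) ≤ ⟪H v, v⟫ := by rw [sq]; exact h3'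
    have hpos : 0 ≤ ζ * ‖u‖ ^ 2 := mul_nonneg hζ.le (sq_nonneg _)
    linarith
end

section
/- Suppose the linear system [[H, J], [Jᵀ, 0]][d; y] = −[g; c] is solved, where J ∈ ℝ^{n×m} has full column rank, Z ∈ ℝ^{n×(n−m)} has columns forming a basis of Null(Jᵀ), and ZᵀHZ is invertible. Then y = J⁺(I − HZ(ZᵀHZ)⁻¹Zᵀ)(H(J⁺)ᵀc − g), where J⁺ = (JᵀJ)⁻¹Jᵀ. -/
open Matrix

lemma isUnit_det_of_rank_eq_card {m : ℕ} (A : Matrix (Fin m) (Fin m) ℝ)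
    (h : A.rank = m) : IsUnit A.det := by
  rw [← Matrix.isUnit_iff_isUnit_det, ← Matrix.mulVec_surjective_iff_isUnit]
  have : LinearMap.range A.mulVecLin = ⊤ := by
    apply Submodule.eq_top_of_finrank_eq
    rw [Matrix.rank] at h
    simp [h]
  intro v
  exact (LinearMap.range_eq_top.mp this) v

/-- Closed-form expression for the SQP Lagrange multiplier: if
`H d + J y = −g` and `Jᵀ d = −c`, with `J` of full column rank, `Z` a basis of
`Null(Jᵀ)`, and `ZᵀHZ` invertible, then
`y = J⁺(I − HZ(ZᵀHZ)⁻¹Zᵀ)(H(J⁺)ᵀc − g)` where `J⁺ = (JᵀJ)⁻¹Jᵀ`. -/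
theorem sqp_multiplier_formula {n m : ℕ} (hmn : m ≤ n)
    (H : Matrix (Fin n) (Fin n) ℝ)
    (J : Matrix (Fin n) (Fin m) ℝ) (hJ : J.rank = m)
    (Z : Matrix (Fin n) (Fin (n - m)) ℝ)
    (hJZ : Jᵀ * Z = 0)
    (hspan : ∀ w : Fin n → ℝ, Jᵀ *ᵥ w = 0 → ∃ z : Fin (n - m) → ℝ, w = Z *ᵥ z)
    (hZHZ : IsUnit (Zᵀ * H * Z).det)
    (d : Fin n → ℝ) (y : Fin m → ℝ) (g : Fin n → ℝ) (c : Fin m → ℝ)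
    (hsys1 : H *ᵥ d + J *ᵥ y = -g) (hsys2 : Jᵀ *ᵥ d = -c) :
    y = ((Jᵀ * J)⁻¹ * Jᵀ) *ᵥ
      ((1 - H * Z * (Zᵀ * H * Z)⁻¹ * Zᵀ) *ᵥ
        (H *ᵥ (((Jᵀ * J)⁻¹ * Jᵀ)ᵀ *ᵥ c) - g)) := by
  set K : Matrix (Fin m) (Fin n) ℝ := (Jᵀ * J)⁻¹ * Jᵀ with hK
  have hJtJ : IsUnit (Jᵀ * J).det := by
    apply isUnit_det_of_rank_eq_card
    rw [Matrix.rank_transpose_mul_self, hJ]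
  have hKJ : K * J = 1 := by
    rw [hK, Matrix.mul_assoc, Matrix.nonsing_inv_mul _ hJtJ]
  have hJtKt : Jᵀ * Kᵀ = 1 := by
    have := congrArg Matrix.transpose hKJ
    rwa [Matrix.transpose_mul, Matrix.transpose_one] at this
  obtain ⟨w, hw⟩ := hspan (d + Kᵀ *ᵥ c) (by
    rw [Matrix.mulVec_add, hsys2, Matrix.mulVec_mulVec, hJtKt, Matrix.one_mulVec]
    simp)
  have hd : d = Z *ᵥ w - Kᵀ *ᵥ c := by
    rw [← hw]; abel
  have hZtJ : Zᵀ * J = 0 := by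
    have := congrArg Matrix.transpose hJZ
    rwa [Matrix.transpose_mul, Matrix.transpose_transpose, Matrix.transpose_zero] at this
  have hZH : Zᵀ *ᵥ (H *ᵥ d) = -(Zᵀ *ᵥ g) := by
    have := congrArg (fun v => Zᵀ *ᵥ v) hsys1
    simpa [Matrix.mulVec_add, Matrix.mulVec_mulVec, hZtJ, Matrix.mulVec_neg,
      Matrix.zero_mulVec] using this
  set M : Matrix (Fin (n-m)) (Fin (n-m)) ℝ := (Zᵀ * H * Z)⁻¹ with hM
  have hwv : (Zᵀ * H * Z) *ᵥ w = (Zᵀ * H * Kᵀ) *ᵥ c - Zᵀ *ᵥ g := by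
    have h := hZH
    rw [hd] at h
    simp only [Matrix.mulVec_sub, Matrix.mulVec_mulVec, Matrix.mul_assoc] at h ⊢
    rw [sub_eq_iff_eq_add] at h
    rw [h]; abel
  have hwval : w = M *ᵥ ((Zᵀ * H * Kᵀ) *ᵥ c - Zᵀ *ᵥ g) := by
    rw [← hwv, hM, Matrix.mulVec_mulVec, Matrix.nonsing_inv_mul _ hZHZ, Matrix.one_mulVec]
  have hy : y = K *ᵥ (-g) - (K * H) *ᵥ d := by
    have := congrArg (fun v => K *ᵥ v) hsys1
    simp only [Matrix.mulVec_add, Matrix.mulVec_mulVec, hKJ, Matrix.one_mulVec] at this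
    rw [← this]; abel
  rw [hy, hd, hwval]
  simp only [Matrix.sub_mulVec, Matrix.mulVec_sub, Matrix.mulVec_add, Matrix.mulVec_mulVec,
    Matrix.one_mulVec, Matrix.mulVec_neg, Matrix.sub_mul, Matrix.one_mul, Matrix.mul_assoc, neg_sub, sub_neg_eq_add]
  abel
end

section
/- Suppose for all k in a neighborhood condition, Y_k = M(X_k)(H(X_k)(∇c(X_k)⁺)ᵀc(X_k) − G_k) and y_⋆ = −M(x_⋆)∇f(x_⋆) with c(x_⋆) = 0. Assume: ‖c(x) − c(x̄)‖₂ ≤ L_c‖x − x̄‖₂, ‖∇f(x) − ∇f(x̄)‖₂ ≤ L_{∇f}‖x − x̄‖₂, ‖∇f(x)‖₂ ≤ κ_{∇f}, ‖H(x)‖₂ ≤ κ_H, σ_min(∇c(x)) ≥ r, ‖M(x)‖₂ ≤ r^{−1}, and ‖M(x) − M(x̄)‖₂ ≤ L_M‖x − x̄‖₂ for all x, x̄ in the neighborhood. Then ‖Y_k − y_⋆‖₂ ≤ κ_y‖X_k − x_⋆‖₂ + r^{−1}‖∇f(X_k) − G_k‖₂, where κ_y := κ_H L_c r^{−2} + L_{∇f}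 r^{−1} + κ_{∇f} L_M. -/
open Matrix Metric
open scoped Matrix.Norms.L2Operator

/-- View a plain tuple as an element of Euclidean space (for the `ℓ²` norm). -/
def toE {k : ℕ} (x : Fin k → ℝ) : EuclideanSpace ℝ (Fin k) := WithLp.toLp 2 x

/-- View a Euclidean vector as a plain tuple. -/
def toV {k : ℕ} (x : EuclideanSpace ℝ (Fin k)) : Fin k → ℝ := x

/-- Moore–Penrose pseudoinverse of a full-column-rank matrix. -/
noncomputable def Matrix.pinv {n m : ℕ} (A : Matrix (Fin n) (Fin m) ℝ) :
    Matrix (Fin m) (Fin n) ℝ :=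
  (Aᵀ * A)⁻¹ * Aᵀ

@[simp] lemma toV_toE {k : ℕ} (x : Fin k → ℝ) : toV (toE x) = x := rfl
@[simp] lemma toV_sub {k : ℕ} (x y : EuclideanSpace ℝ (Fin k)) :
    toV (x - y) = toV x - toV y := rfl

lemma mulVec_norm_le {k l : ℕ} (A : Matrix (Fin k) (Fin l) ℝ)
    (x : EuclideanSpace ℝ (Fin l)) : ‖toE (A *ᵥ toV x)‖ ≤ ‖A‖ * ‖x‖ :=
  A.l2_opNorm_mulVec x

lemma norm_sq_mulVec {k l : ℕ} (J : Matrix (Fin k) (Fin l) ℝ) (w : Fin l → ℝ) :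
    ‖toE (J *ᵥ w)‖ ^ 2 = w ⬝ᵥ ((Jᵀ * J) *ᵥ w) := by
  have h := real_inner_self_eq_norm_sq (toE (J *ᵥ w))
  rw [PiLp.inner_apply] at h
  have h2 : (J *ᵥ w) ⬝ᵥ (J *ᵥ w) = w ⬝ᵥ ((Jᵀ * J) *ᵥ w) := by
    rw [Matrix.dotProduct_mulVec, ← Matrix.mulVec_transpose, Matrix.mulVec_mulVec,
      dotProduct_comm]
  rw [← h2, ← h]
  simp [dotProduct, toE, sq]

lemma dot_le {k : ℕ} (w v : Fin k → ℝ) : w ⬝ᵥ v ≤ ‖toE w‖ * ‖toE v‖ := by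
  have := real_inner_le_norm (toE w) (toE v)
  rw [PiLp.inner_apply] at this
  simpa [dotProduct, toE, mul_comm] using this

lemma pinvT_bound {n m : ℕ} (J : Matrix (Fin n) (Fin m) ℝ) (r : ℝ) (hr : 0 < r)
    (hs : ∀ w : EuclideanSpace ℝ (Fin m), r * ‖w‖ ≤ ‖toE (J *ᵥ toV w)‖)
    (v : EuclideanSpace ℝ (Fin m)) :
    ‖toE (J.pinvᵀ *ᵥ toV v)‖ ≤ r⁻¹ * ‖v‖ := by
  have hinj : Function.Injective (Jᵀ * J).mulVec := by
    intro a b hab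
    have hab' : (Jᵀ * J) *ᵥ (a - b) = 0 := by
      rw [Matrix.mulVec_sub, hab, sub_self]
    have hz : ‖toE (J *ᵥ (a - b))‖ ^ 2 = 0 := by
      rw [norm_sq_mulVec, hab', dotProduct_zero]
    have hz' : ‖toE (J *ᵥ (a - b))‖ = 0 := by
      nlinarith [norm_nonneg (toE (J *ᵥ (a - b)))]
    have hle := hs (toE (a - b))
    rw [toV_toE, hz'] at hle
    have h0 : ‖toE (a - b)‖ ≤ 0 := by nlinarith [norm_nonneg (toE (a-b)), hr]
    have hab0 : toE (a - b) = 0 := norm_le_zero_iff.mp h0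
    exact sub_eq_zero.mp (congrArg toV hab0)
  have hunit : IsUnit (Jᵀ * J) := Matrix.mulVec_injective_iff_isUnit.mp hinj
  set w : Fin m → ℝ := (Jᵀ * J)⁻¹ *ᵥ toV v with hw
  have hJw : J.pinvᵀ *ᵥ toV v = J *ᵥ w := by
    rw [Matrix.pinv, Matrix.transpose_mul, Matrix.transpose_transpose, hw,
      Matrix.mulVec_mulVec,
      Matrix.transpose_nonsing_inv, Matrix.transpose_mul, Matrix.transpose_transpose]
  have hJJw : (Jᵀ * J) *ᵥ w = toV v := by
    rw [hw, Matrix.mulVec_mulVec,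
      Matrix.mul_nonsing_inv _ (hunit.map Matrix.detMonoidHom), Matrix.one_mulVec]
  have hsq : ‖toE (J *ᵥ w)‖ ^ 2 ≤ ‖toE w‖ * ‖v‖ := by
    rw [norm_sq_mulVec, hJJw]
    exact dot_le w (toV v)
  have hrw : r * ‖toE w‖ ≤ ‖toE (J *ᵥ w)‖ := by simpa using hs (toE w)
  rw [hJw]
  rcases le_or_gt ‖toE (J *ᵥ w)‖ 0 with h | h
  · have h0 : ‖toE (J *ᵥ w)‖ = 0 := le_antisymm h (norm_nonneg _)
    rw [h0]; positivity
  · have hwb : ‖toE w‖ ≤ r⁻¹ * ‖toE (J *ᵥ w)‖ := by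
      rw [le_inv_mul_iff₀ hr]; exact hrw
    have h1 : ‖toE (J *ᵥ w)‖ ^ 2 ≤ r⁻¹ * ‖toE (J *ᵥ w)‖ * ‖v‖ := by
      nlinarith [norm_nonneg v]
    nlinarith

/-- Theorem 2 of the paper (multiplier error bound), stated deterministically:
`‖Y_k − y_⋆‖ ≤ κ_y ‖X_k − x_⋆‖ + r⁻¹ ‖∇f(X_k) − G_k‖` with
`κ_y = κ_H L_c r⁻² + L_{∇f} r⁻¹ + κ_{∇f} L_M`. -/
theorem multiplier_error_bound {n m : ℕ} (hmn : m ≤ n)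
    (Jc : EuclideanSpace ℝ (Fin n) → Matrix (Fin n) (Fin m) ℝ)
    (cf : EuclideanSpace ℝ (Fin n) → EuclideanSpace ℝ (Fin m))
    (gradf : EuclideanSpace ℝ (Fin n) → EuclideanSpace ℝ (Fin n))
    (M : EuclideanSpace ℝ (Fin n) → Matrix (Fin m) (Fin n) ℝ)
    (Hm : EuclideanSpace ℝ (Fin n) → Matrix (Fin n) (Fin n) ℝ)
    (ε r Lc Lf κf κH LM : ℝ)
    (hε : 0 ≤ ε) (hr : 0 < r) (hLc : 0 < Lc) (hLf : 0 < Lf) (hκf : 0 < κf)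
    (hκH : 0 < κH) (hLM : 0 < LM)
    (xstar Xk Gk : EuclideanSpace ℝ (Fin n))
    (hXk : Xk ∈ closedBall xstar ε)
    (hcstar : cf xstar = 0)
    -- Lipschitz continuity of `c`, `∇f`, and `M` on the neighborhood
    (hcLip : ∀ x ∈ closedBall xstar ε, ∀ x' ∈ closedBall xstar ε,
      ‖cf x - cf x'‖ ≤ Lc * ‖x - x'‖)
    (hgLip : ∀ x ∈ closedBall xstar ε, ∀ x' ∈ closedBall xstar ε,
      ‖gradf x - gradf x'‖ ≤ Lf * ‖x - x'‖)
    (hMLip : ∀ x ∈ closedBall xstar ε, ∀ x' ∈ closedBall xstar ε,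
      ‖M x - M x'‖ ≤ LM * ‖x - x'‖)
    -- bounds on the neighborhood
    (hgbd : ∀ x ∈ closedBall xstar ε, ‖gradf x‖ ≤ κf)
    (hHbd : ∀ x ∈ closedBall xstar ε, ‖Hm x‖ ≤ κH)
    (hMbd : ∀ x ∈ closedBall xstar ε, ‖M x‖ ≤ r⁻¹)
    (hsmin : ∀ x ∈ closedBall xstar ε, ∀ w : EuclideanSpace ℝ (Fin m),
      r * ‖w‖ ≤ ‖toE (Jc x *ᵥ toV w)‖)
    -- multiplier formulas
    (Yk : EuclideanSpace ℝ (Fin m)) (ystar : EuclideanSpace ℝ (Fin m))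
    (hYk : Yk = toE (M Xk *ᵥ
      (Hm Xk *ᵥ ((Jc Xk).pinvᵀ *ᵥ toV (cf Xk)) - toV Gk)))
    (hystar : ystar = -toE (M xstar *ᵥ toV (gradf xstar))) :
    ‖Yk - ystar‖ ≤ (κH * Lc * r⁻¹ ^ 2 + Lf * r⁻¹ + κf * LM) * ‖Xk - xstar‖ +
      r⁻¹ * ‖gradf Xk - Gk‖ := by
  have hx0 : xstar ∈ closedBall xstar ε := mem_closedBall_self hε
  set J := Jc Xk with hJ
  set p : Fin n → ℝ := J.pinvᵀ *ᵥ toV (cf Xk) with hp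
  -- the four terms
  set t1 : Fin m → ℝ := M Xk *ᵥ (Hm Xk *ᵥ p) with ht1
  set t2 : Fin m → ℝ := M Xk *ᵥ (toV (gradf Xk) - toV Gk) with ht2
  set t3 : Fin m → ℝ := M Xk *ᵥ (toV (gradf xstar) - toV (gradf Xk)) with ht3
  set t4 : Fin m → ℝ := (M xstar - M Xk) *ᵥ toV (gradf xstar) with ht4
  have key : Yk - ystar = toE t1 + toE t2 + toE t3 + toE t4 := by
    rw [hYk, hystar, sub_neg_eq_add]
    have : (M Xk *ᵥ (Hm Xk *ᵥ p - toV Gk)) + (M xstar *ᵥ toV (gradf xstar))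
        = t1 + t2 + t3 + t4 := by
      rw [ht1, ht2, ht3, ht4]
      simp only [Matrix.mulVec_sub, Matrix.sub_mulVec]
      abel
    show toE ((M Xk *ᵥ (Hm Xk *ᵥ p - toV Gk)) + (M xstar *ᵥ toV (gradf xstar)))
        = toE (t1 + t2 + t3 + t4)
    rw [this]
  set d := ‖Xk - xstar‖ with hd
  have hd0 : 0 ≤ d := norm_nonneg _
  have hcXk : ‖cf Xk‖ ≤ Lc * d := by
    have := hcLip Xk hXk xstar hx0
    rwa [hcstar, sub_zero] at this
  have hpb : ‖toE p‖ ≤ r⁻¹ * (Lc * d) := by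
    calc ‖toE p‖ ≤ r⁻¹ * ‖cf Xk‖ := pinvT_bound J r hr (hsmin Xk hXk) (cf Xk)
    _ ≤ r⁻¹ * (Lc * d) := by
        apply mul_le_mul_of_nonneg_left hcXk (by positivity)
  have hHp : ‖toE (Hm Xk *ᵥ p)‖ ≤ κH * (r⁻¹ * (Lc * d)) := by
    calc ‖toE (Hm Xk *ᵥ p)‖ = ‖toE (Hm Xk *ᵥ toV (toE p))‖ := by rw [toV_toE]
    _ ≤ ‖Hm Xk‖ * ‖toE p‖ := mulVec_norm_le _ _
    _ ≤ κH * (r⁻¹ * (Lc * d)) := by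
        apply mul_le_mul (hHbd Xk hXk) hpb (norm_nonneg _) (le_of_lt hκH)
  have hb1 : ‖toE t1‖ ≤ r⁻¹ * (κH * (r⁻¹ * (Lc * d))) := by
    calc ‖toE t1‖ = ‖toE (M Xk *ᵥ toV (toE (Hm Xk *ᵥ p)))‖ := by rw [ht1, toV_toE]
    _ ≤ ‖M Xk‖ * ‖toE (Hm Xk *ᵥ p)‖ := mulVec_norm_le _ _
    _ ≤ r⁻¹ * (κH * (r⁻¹ * (Lc * d))) := by
        apply mul_le_mul (hMbd Xk hXk) hHp (norm_nonneg _) (by positivity)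
  have hb2 : ‖toE t2‖ ≤ r⁻¹ * ‖gradf Xk - Gk‖ := by
    calc ‖toE t2‖ = ‖toE (M Xk *ᵥ toV (gradf Xk - Gk))‖ := by rw [ht2, toV_sub]
    _ ≤ ‖M Xk‖ * ‖gradf Xk - Gk‖ := mulVec_norm_le _ _
    _ ≤ r⁻¹ * ‖gradf Xk - Gk‖ :=
        mul_le_mul_of_nonneg_right (hMbd Xk hXk) (norm_nonneg _)
  have hgs : ‖gradf xstar - gradf Xk‖ ≤ Lf * d := by
    have := hgLip xstar hx0 Xk hXk
    rwa [norm_sub_rev xstar Xk] at this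
  have hb3 : ‖toE t3‖ ≤ r⁻¹ * (Lf * d) := by
    calc ‖toE t3‖ = ‖toE (M Xk *ᵥ toV (gradf xstar - gradf Xk))‖ := by rw [ht3, toV_sub]
    _ ≤ ‖M Xk‖ * ‖gradf xstar - gradf Xk‖ := mulVec_norm_le _ _
    _ ≤ r⁻¹ * (Lf * d) := by
        apply mul_le_mul (hMbd Xk hXk) hgs (norm_nonneg _) (by positivity)
  have hMs : ‖M xstar - M Xk‖ ≤ LM * d := by
    have := hMLip xstar hx0 Xk hXk
    rwa [norm_sub_rev xstar Xk] at this
  have hb4 : ‖toE t4‖ ≤ LM * d * κf := by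
    calc ‖toE t4‖ ≤ ‖M xstar - M Xk‖ * ‖gradf xstar‖ := mulVec_norm_le _ _
    _ ≤ LM * d * κf := by
        apply mul_le_mul hMs (hgbd xstar hx0) (norm_nonneg _) (by positivity)
  have htot : ‖Yk - ystar‖ ≤ ‖toE t1‖ + ‖toE t2‖ + ‖toE t3‖ + ‖toE t4‖ := by
    rw [key]
    calc ‖toE t1 + toE t2 + toE t3 + toE t4‖
        ≤ ‖toE t1 + toE t2 + toE t3‖ + ‖toE t4‖ := norm_add_le _ _
    _ ≤ ‖toE t1 + toE t2‖ + ‖toE t3‖ + ‖toE t4‖ := by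
        have := norm_add_le (toE t1 + toE t2) (toE t3); linarith
    _ ≤ ‖toE t1‖ + ‖toE t2‖ + ‖toE t3‖ + ‖toE t4‖ := by
        have := norm_add_le (toE t1) (toE t2); linarith
  have hrinv : (0:ℝ) < r⁻¹ := by positivity
  nlinarith [htot, hb1, hb2, hb3, hb4]
end
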